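/- Norm recovery via a TRO approximate identity: let M ⊆ B(H,K) be a TRO and suppose (m_i)_{i∈I} is a net with m_i ∈ M^{n_i} (columns over M), ‖m_i‖ ≤ 1, such that m_i m_i* l → l in norm for all l ∈ M and hence m_i m_i* b m_i m_i* → b for all b in B = closure(span(M M* B(K) M M*))-type algebra satisfying b ∈ closure(span(M M* b M M*)). Then sup_i ‖m_i* b m_i‖ = ‖b‖ for every such b. -/

import Mathlib

set_option synthInstance.maxHeartbeats 400000
set_option maxHeartbeats 1000000


open ContinuousLinearMap

noncomputable section

variable {H K : Type*}
    [NormedAddCommGroup H] [InnerProductSpace ℂ H] [CompleteSpace H]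
    [NormedAddCommGroup K] [InnerProductSpace ℂ K] [CompleteSpace K]

/-- For a column `c = (c 0, ..., c (n-1))ᵀ` of operators in `B(H,K)`, the operator
`Σ_k c_k c_k* ∈ B(K)`. -/
def colSum {n : ℕ} (c : Fin n → (H →L[ℂ] K)) : K →L[ℂ] K :=
  ∑ k : Fin n, (c k) ∘L adjoint (c k)

/-- For `b ∈ B(K)` and a column `c` over `B(H,K)`, the `n × n` operator matrix
`(c_j* b c_k)` acting on the Hilbert space `H^n = PiLp 2 (fun _ => H)`. -/
def colMat {n : ℕ} (b : K →L[ℂ] K) (c : Fin n → (H →L[ℂ] K)) :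
    PiLp 2 (fun _ : Fin n => H) →L[ℂ] PiLp 2 (fun _ : Fin n => H) :=
  ((PiLp.continuousLinearEquiv 2 ℂ (fun _ : Fin n => H)).symm :
      ((i : Fin n) → H) →L[ℂ] PiLp 2 (fun _ : Fin n => H)) ∘L
    (ContinuousLinearMap.pi fun j : Fin n =>
      ∑ k : Fin n, ((adjoint (c j)) ∘L b ∘L (c k)) ∘L
        (ContinuousLinearMap.proj (R := ℂ) (φ := fun _ : Fin n => H) k)) ∘L
    ((PiLp.continuousLinearEquiv 2 ℂ (fun _ : Fin n => H)) :
      PiLp 2 (fun _ : Fin n => H) →L[ℂ] ((i : Fin n) → H))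

def colC {n : ℕ} (c : Fin n → (H →L[ℂ] K)) : PiLp 2 (fun _ : Fin n => H) →L[ℂ] K :=
  (∑ k : Fin n, (c k) ∘L ContinuousLinearMap.proj (R := ℂ) (φ := fun _ : Fin n => H) k) ∘L
    ((PiLp.continuousLinearEquiv 2 ℂ (fun _ : Fin n => H)) :
      PiLp 2 (fun _ : Fin n => H) →L[ℂ] ((i : Fin n) → H))

def colD {n : ℕ} (c : Fin n → (H →L[ℂ] K)) : K →L[ℂ] PiLp 2 (fun _ : Fin n => H) :=
  ((PiLp.continuousLinearEquiv 2 ℂ (fun _ : Fin n => H)).symm :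
      ((i : Fin n) → H) →L[ℂ] PiLp 2 (fun _ : Fin n => H)) ∘L
    (ContinuousLinearMap.pi fun j : Fin n => adjoint (c j))

instance {n : ℕ} : CompleteSpace (PiLp 2 (fun _ : Fin n => H)) :=
  inferInstance

lemma colC_apply {n : ℕ} (c : Fin n → (H →L[ℂ] K)) (x : PiLp 2 (fun _ : Fin n => H)) :
    colC c x = ∑ k, c k (x k) := by
  simp [colC, ContinuousLinearMap.sum_apply]

lemma colD_apply {n : ℕ} (c : Fin n → (H →L[ℂ] K)) (y : K) (j : Fin n) :
    colD c y j = adjoint (c j) y := by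
  simp [colD]

lemma colD_eq_adjoint {n : ℕ} (c : Fin n → (H →L[ℂ] K)) :
    colD c = adjoint (colC c) := by
  rw [eq_adjoint_iff]
  intro x y
  simp [PiLp.inner_apply, colD_apply, colC_apply, adjoint_inner_left, inner_sum]


lemma colSum_eq {n : ℕ} (c : Fin n → (H →L[ℂ] K)) :
    colSum c = colC c ∘L adjoint (colC c) := by
  rw [← colD_eq_adjoint]
  ext y
  simp [colSum, colC_apply, colD_apply, ContinuousLinearMap.sum_apply]

lemma colMat_eq {n : ℕ} (b : K →L[ℂ] K) (c : Fin n → (H →L[ℂ] K)) :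
    colMat b c = adjoint (colC c) ∘L b ∘L colC c := by
  rw [← colD_eq_adjoint]
  ext x j
  simp [colMat, colD, colC_apply, ContinuousLinearMap.sum_apply, map_sum]

lemma norm_colC_le {n : ℕ} (c : Fin n → (H →L[ℂ] K)) (h : ‖colSum c‖ ≤ 1) :
    ‖colC c‖ ≤ 1 := by
  have h2 : ‖colC c ∘L adjoint (colC c)‖ = ‖colC c‖ * ‖colC c‖ := by
    have := norm_adjoint_comp_self (adjoint (colC c))
    rwa [adjoint_adjoint, adjoint.norm_map] at this
  rw [colSum_eq, h2] at h
  nlinarith [norm_nonneg (colC c)]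

/-- Norm recovery via a TRO approximate identity: let `M ⊆ B(H,K)` be a TRO and
`(m_i)` a net of columns over `M` with `‖m_i m_i*‖ = ‖Σ_k m_{i,k} m_{i,k}*‖ ≤ 1` such
that `m_i m_i* b m_i m_i* → b` in norm for a fixed `b ∈ B(K)`. Then
`sup_i ‖m_i* b m_i‖ = ‖b‖`, where `m_i* b m_i` is the operator matrix `(m_{i,j}* b m_{i,k})`
acting on `H^{n_i}`. -/
theorem stmt19
    (M : Submodule ℂ (H →L[ℂ] K)) (hMclosed : IsClosed (M : Set (H →L[ℂ] K)))
    (hTRO : ∀ m ∈ M, ∀ n ∈ M, ∀ l ∈ M, m ∘L (adjoint n) ∘L l ∈ M)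
    {ι : Type*} [Nonempty ι] (F : Filter ι) [F.NeBot]
    (n : ι → ℕ) (c : (i : ι) → Fin (n i) → (H →L[ℂ] K))
    (hcM : ∀ i, ∀ k, c i k ∈ M)
    (hnorm : ∀ i, ‖colSum (c i)‖ ≤ 1)
    (b : K →L[ℂ] K)
    (happrox : Filter.Tendsto (fun i => colSum (c i) ∘L b ∘L colSum (c i)) F (nhds b)) :
    ⨆ i, ‖colMat b (c i)‖ = ‖b‖ := by
  have hC : ∀ i, ‖colC (c i)‖ ≤ 1 := fun i => norm_colC_le _ (hnorm i)
  have hCadj : ∀ i, ‖adjoint (colC (c i))‖ ≤ 1 := fun i => by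
    rw [adjoint.norm_map]; exact hC i
  -- upper bound
  have hub : ∀ i, ‖colMat b (c i)‖ ≤ ‖b‖ := by
    intro i
    rw [colMat_eq]
    calc ‖adjoint (colC (c i)) ∘L b ∘L colC (c i)‖
        ≤ ‖adjoint (colC (c i))‖ * ‖b ∘L colC (c i)‖ := opNorm_comp_le _ _
      _ ≤ ‖adjoint (colC (c i))‖ * (‖b‖ * ‖colC (c i)‖) := by
          gcongr; exact opNorm_comp_le _ _
      _ ≤ 1 * (‖b‖ * 1) := by
          exact mul_le_mul (hCadj i)
            (mul_le_mul_of_nonneg_left (hC i) (norm_nonneg b)) (by positivity) one_pos.le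
      _ = ‖b‖ := by ring
  -- lower bound: each ‖colSum b colSum‖ ≤ ‖colMat‖
  have hlb : ∀ i, ‖colSum (c i) ∘L b ∘L colSum (c i)‖ ≤ ‖colMat b (c i)‖ := by
    intro i
    have : colSum (c i) ∘L b ∘L colSum (c i)
        = colC (c i) ∘L (colMat b (c i)) ∘L adjoint (colC (c i)) := by
      rw [colMat_eq, colSum_eq]
      ext y
      simp
    rw [this]
    calc ‖colC (c i) ∘L colMat b (c i) ∘L adjoint (colC (c i))‖
        ≤ ‖colC (c i)‖ * ‖colMat b (c i) ∘L adjoint (colC (c i))‖ := opNorm_comp_le _ _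
      _ ≤ ‖colC (c i)‖ * (‖colMat b (c i)‖ * ‖adjoint (colC (c i))‖) := by
          gcongr; exact opNorm_comp_le _ _
      _ ≤ 1 * (‖colMat b (c i)‖ * 1) := by
          exact mul_le_mul (hC i)
            (mul_le_mul_of_nonneg_left (hCadj i) (norm_nonneg _)) (by positivity) one_pos.le
      _ = ‖colMat b (c i)‖ := by ring
  have hbdd : BddAbove (Set.range fun i => ‖colMat b (c i)‖) :=
    ⟨‖b‖, by rintro x ⟨i, rfl⟩; exact hub i⟩
  refine le_antisymm (ciSup_le hub) ?_
  have htends : Filter.Tendsto (fun i => ‖colSum (c i) ∘L b ∘L colSum (c i)‖) F (nhds ‖b‖) :=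
    (continuous_norm.tendsto b).comp happrox
  refine le_of_tendsto htends (Filter.Eventually.of_forall fun i => ?_)
  exact (hlb i).trans (le_ciSup hbdd i)
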